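/- Let P be a finite set of primes with minimum element q and let Q ∈ P maximize ‖Q‖/log_3(Q). Then for all n > 1, the P-algorithm logarithmic complexity satisfies ‖n‖_P / log_3(n) ≤ ‖Q‖/log_3(Q) + (q−1)/log_3(q). -/

import Mathlib

/-- `IsExpr n m` : the positive integer `n` is representable by an arithmetic
expression in basis `{1, +, ·}` containing exactly `m` ones. -/
inductive IsExpr : ℕ → ℕ → Prop
  | one : IsExpr 1 1
  | add {a b m n : ℕ} : IsExpr a m → IsExpr b n → IsExpr (a + b) (m + n)
  | mul {a b m n : ℕ} : IsExpr a m → IsExpr b n → IsExpr (a * b) (m + n)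

/-- Integer complexity `‖n‖`: the minimum number of 1's needed to represent `n`
using 1's, addition and multiplication. -/
noncomputable def cpx (n : ℕ) : ℕ := sInf {m | IsExpr n m}

/-- `PAlg P n c` : the `P`-algorithm, run on the positive integer `n`, builds an
expression for `n` in basis `{1, +, ·}` containing `c` ones.  The algorithm
represents `1` as `1`; represents `p ∈ P` by a shortest expression (of `cpx p`
ones); if `n ∉ P` is divisible by some `p ∈ P` it writes `n = p · (n / p)` and
recurses on `n / p`; otherwise it writes `n = 1 + (n - 1)` and recurses on `n - 1`. -/
inductive PAlg (P : Finset ℕ) : ℕ → ℕ → Prop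
  | one : PAlg P 1 1
  | base {p : ℕ} : p ∈ P → PAlg P p (cpx p)
  | div {n p c : ℕ} : 1 < n → n ∉ P → p ∈ P → p ∣ n →
      PAlg P (n / p) c → PAlg P n (cpx p + c)
  | step {n c : ℕ} : 1 < n → (∀ p ∈ P, ¬ p ∣ n) →
      PAlg P (n - 1) c → PAlg P n (c + 1)

/-- `‖n‖_P` : the number of ones in the expression built by the `P`-algorithm. -/
noncomputable def cpxP (P : Finset ℕ) (n : ℕ) : ℕ := sInf {c | PAlg P n c}

lemma isExpr_one_le {a m : ℕ} (h : IsExpr a m) : 1 ≤ m ∧ 1 ≤ a := by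
  induction h with
  | one => exact ⟨le_refl 1, le_refl 1⟩
  | add h1 h2 ih1 ih2 => omega
  | mul h1 h2 ih1 ih2 =>
      exact ⟨by omega, le_trans (by norm_num) (Nat.mul_le_mul ih1.2 ih2.2)⟩

lemma isExpr_self : ∀ n, 1 ≤ n → IsExpr n n := by
  intro n
  induction n with
  | zero => omega
  | succ n ih =>
      intro _
      rcases Nat.eq_zero_or_pos n with h | h
      · subst h; exact IsExpr.one
      · exact IsExpr.add (ih h) IsExpr.one

lemma isExpr_le_pow {a m : ℕ} (h : IsExpr a m) : a ≤ 2 ^ (m - 1) := by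
  induction h with
  | one => simp
  | @add a b m n h1 h2 ih1 ih2 =>
      have p1 := (isExpr_one_le h1).1
      have p2 := (isExpr_one_le h2).1
      have e1 : 2 ^ (m - 1) ≤ 2 ^ (m + n - 2) := Nat.pow_le_pow_right (by norm_num) (by omega)
      have e2 : 2 ^ (n - 1) ≤ 2 ^ (m + n - 2) := Nat.pow_le_pow_right (by norm_num) (by omega)
      have e3 : 2 ^ (m + n - 2) * 2 = 2 ^ (m + n - 1) := by
        rw [← pow_succ]; congr 1; omega
      omega
  | @mul a b m n h1 h2 ih1 ih2 =>
      calc a * b ≤ 2 ^ (m - 1) * 2 ^ (n - 1) := Nat.mul_le_mul ih1 ih2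
        _ = 2 ^ (m - 1 + (n - 1)) := (pow_add 2 _ _).symm
        _ ≤ 2 ^ (m + n - 1) := Nat.pow_le_pow_right (by norm_num) (by omega)

lemma cpx_isExpr {n : ℕ} (hn : 1 ≤ n) : IsExpr n (cpx n) :=
  Nat.sInf_mem ⟨n, isExpr_self n hn⟩

lemma cpxP_le {P : Finset ℕ} {n c : ℕ} (h : PAlg P n c) : cpxP P n ≤ c :=
  Nat.sInf_le h

lemma palg_exists (P : Finset ℕ) (hprime : ∀ p ∈ P, p.Prime) :
    ∀ n, 1 ≤ n → ∃ c, PAlg P n c := by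
  intro n
  induction n using Nat.strong_induction_on with
  | _ n ih =>
    intro hn
    rcases eq_or_lt_of_le hn with h1 | h1
    · exact ⟨1, h1 ▸ PAlg.one⟩
    by_cases hP : n ∈ P
    · exact ⟨cpx n, PAlg.base hP⟩
    by_cases hdiv : ∃ p ∈ P, p ∣ n
    · obtain ⟨p, hp, hpn⟩ := hdiv
      have hp2 : 2 ≤ p := (hprime p hp).two_le
      have h2 : n / p < n := Nat.div_lt_self (by omega) (by omega)
      have h3 : 1 ≤ n / p := (Nat.one_le_div_iff (by omega)).2 (Nat.le_of_dvd (by omega) hpn)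
      obtain ⟨c, hc⟩ := ih _ h2 h3
      exact ⟨_, PAlg.div h1 hP hp hpn hc⟩
    · push_neg at hdiv
      obtain ⟨c, hc⟩ := ih (n - 1) (by omega) (by omega)
      exact ⟨c + 1, PAlg.step h1 hdiv hc⟩

lemma palg_cpxP {P : Finset ℕ} (hprime : ∀ p ∈ P, p.Prime) {n : ℕ} (hn : 1 ≤ n) :
    PAlg P n (cpxP P n) :=
  Nat.sInf_mem (palg_exists P hprime n hn)

lemma palg_chain (P : Finset ℕ) :
    ∀ t n c, (∀ s, s < t → 1 < n - s ∧ ∀ p ∈ P, ¬ p ∣ (n - s)) →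
      PAlg P (n - t) c → PAlg P n (c + t) := by
  intro t
  induction t with
  | zero => intro n c _ h; simpa using h
  | succ t ih =>
    intro n c hs h
    have h0 := hs 0 (by omega)
    have h1n : 1 < n := by simpa using h0.1
    have hstep : PAlg P (n - 1) (c + t) := by
      apply ih (n - 1) c
      · intro s hslt
        have hx := hs (s + 1) (by omega)
        rw [show n - 1 - s = n - (s + 1) by omega]
        exact hx
      · rw [show n - 1 - t = n - (t + 1) by omega]
        exact h
    have := PAlg.step h1n (by simpa using h0.2) hstep
    exact (show c + (t + 1) = c + t + 1 by omega) ▸ this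

lemma palg_small (P : Finset ℕ) (q : ℕ) (hqmin : ∀ p ∈ P, q ≤ p) :
    ∀ m, 1 ≤ m → m < q → PAlg P m m := by
  intro m
  induction m with
  | zero => omega
  | succ m ih =>
    intro _ hmq
    rcases Nat.eq_zero_or_pos m with h | h
    · subst h; exact PAlg.one
    · have hprev : PAlg P m m := ih h (by omega)
      have hnd : ∀ p ∈ P, ¬ p ∣ (m + 1) := by
        intro p hp hd
        have := Nat.le_of_dvd (by omega) hd
        have := hqmin p hp
        omega
      have := PAlg.step (n := m + 1) (by omega) hnd (by simpa using hprev)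
      exact this

lemma key_ineq {x y : ℝ} (hx : 2 ≤ x) (hy : x + 1 ≤ y) :
    (x - 1) * Real.log y ≤ (y - 1) * Real.log x := by
  have hx0 : 0 < x := by linarith
  have hy0 : 0 < y := by linarith
  have h1 : Real.log y - Real.log x ≤ y / x - 1 := by
    have := Real.log_le_sub_one_of_pos (x := y / x) (by positivity)
    rwa [Real.log_div (by positivity) (by positivity)] at this
  have h2 : 1 - 1 / x ≤ Real.log x := by
    have := Real.log_le_sub_one_of_pos (x := 1 / x) (by positivity)
    rw [Real.log_div one_ne_zero (by positivity), Real.log_one] at this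
    linarith
  have hlx : 0 < Real.log x := Real.log_pos (by linarith)
  have ha : (x - 1) * (Real.log y - Real.log x) ≤ (x - 1) * (y / x - 1) :=
    mul_le_mul_of_nonneg_left h1 (by linarith)
  have hb : (y - x) * (1 - 1 / x) ≤ (y - x) * Real.log x :=
    mul_le_mul_of_nonneg_left h2 (by linarith)
  have hc : (x - 1) * (y / x - 1) = (y - x) * (1 - 1 / x) := by
    field_simp
  nlinarith [ha, hb, hc]

set_option maxHeartbeats 1000000 in
/-- let `q` be the minimum of `P` and `Q ∈ P` have maximal
logarithmic complexity; then `‖n‖_P/log₃ n ≤ ‖Q‖/log₃ Q + (q−1)/log₃ q`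
for all `n > 1`. -/
theorem stmt14 (P : Finset ℕ) (hP : P.Nonempty) (hprime : ∀ p ∈ P, p.Prime)
    (q : ℕ) (hq : q ∈ P) (hqmin : ∀ p ∈ P, q ≤ p)
    (Q : ℕ) (hQ : Q ∈ P)
    (hQmax : ∀ p ∈ P, (cpx p : ℝ) / Real.logb 3 p ≤ (cpx Q : ℝ) / Real.logb 3 Q) :
    ∀ n : ℕ, 1 < n →
      (cpxP P n : ℝ) / Real.logb 3 n ≤
        (cpx Q : ℝ) / Real.logb 3 Q + ((q : ℝ) - 1) / Real.logb 3 q := by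
  classical
  set A : ℝ := (cpx Q : ℝ) / Real.logb 3 Q with hA
  set B : ℝ := ((q : ℝ) - 1) / Real.logb 3 q with hB
  have hq2 : 2 ≤ q := (hprime q hq).two_le
  have hQ2 : 2 ≤ Q := (hprime Q hQ).two_le
  have lq : 0 < Real.logb 3 q := Real.logb_pos (by norm_num) (by exact_mod_cast hq2)
  have lQ : 0 < Real.logb 3 Q := Real.logb_pos (by norm_num) (by exact_mod_cast hQ2)
  have l2 : 0 < Real.logb 3 2 := Real.logb_pos (by norm_num) (by norm_num)
  have logb_mono : ∀ x y : ℝ, 0 < x → x ≤ y → Real.logb 3 x ≤ Real.logb 3 y := by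
    intro x y hx hxy
    exact Real.logb_le_logb_of_le (by norm_num) hx hxy
  have hln : ∀ n : ℕ, 2 ≤ n → 0 < Real.logb 3 n := by
    intro n hn
    exact Real.logb_pos (by norm_num) (by exact_mod_cast hn)
  have hA0 : 0 ≤ A := div_nonneg (by positivity) lQ.le
  have hB0 : 0 ≤ B := by
    apply div_nonneg _ lq.le
    have : (2 : ℝ) ≤ q := by exact_mod_cast hq2
    linarith
  have hBq : B * Real.logb 3 q = (q : ℝ) - 1 := div_mul_cancel₀ _ lq.ne'
  have hcpxp : ∀ p ∈ P, (cpx p : ℝ) ≤ A * Real.logb 3 p := by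
    intro p hp
    have lp : 0 < Real.logb 3 p :=
      Real.logb_pos (by norm_num) (by exact_mod_cast (hprime p hp).two_le)
    have := hQmax p hp
    rw [div_le_iff₀ lp] at this
    linarith [this]
  have hA1 : ∀ n : ℕ, 2 ≤ n → 1 ≤ A * Real.logb 3 n := by
    intro n hn
    have hQle : (Q : ℝ) ≤ 2 ^ (cpx Q) := by
      have h1 : Q ≤ 2 ^ (cpx Q - 1) := isExpr_le_pow (cpx_isExpr (by omega))
      have h2 : (2:ℕ) ^ (cpx Q - 1) ≤ 2 ^ (cpx Q) := Nat.pow_le_pow_right (by norm_num) (by omega)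
      exact_mod_cast le_trans h1 h2
    have hlogQ : Real.logb 3 Q ≤ (cpx Q) * Real.logb 3 2 := by
      calc Real.logb 3 Q ≤ Real.logb 3 ((2:ℝ) ^ (cpx Q)) := by
            apply logb_mono _ _ (by positivity) hQle
        _ = (cpx Q) * Real.logb 3 2 := by rw [Real.logb_pow]
    have h12 : 1 ≤ A * Real.logb 3 2 := by
      rw [hA, div_mul_eq_mul_div, le_div_iff₀ lQ, one_mul]
      exact hlogQ
    have h2n : Real.logb 3 2 ≤ Real.logb 3 n := by
      apply logb_mono _ _ (by norm_num) (by exact_mod_cast hn)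
    nlinarith [h12, h2n, hA0]
  -- main claim
  have main : ∀ n : ℕ, 2 ≤ n → (cpxP P n : ℝ) ≤ (A + B) * Real.logb 3 n := by
    intro n
    induction n using Nat.strong_induction_on with
    | _ n ih =>
      intro hn
      have hlnn : 0 < Real.logb 3 n := hln n hn
      by_cases hdiv : ∃ p ∈ P, p ∣ n
      · obtain ⟨p, hp, hpn⟩ := hdiv
        have hp2 : 2 ≤ p := (hprime p hp).two_le
        by_cases hnP : n ∈ P
        · have h1 : cpxP P n ≤ cpx n := cpxP_le (PAlg.base hnP)
          have h2 : (cpx n : ℝ) ≤ A * Real.logb 3 n := hcpxp n hnP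
          have h1' : (cpxP P n : ℝ) ≤ (cpx n : ℝ) := by exact_mod_cast h1
          nlinarith [mul_nonneg hB0 hlnn.le]
        · have hpleN : p ≤ n := Nat.le_of_dvd (by omega) hpn
          have hd1 : 1 ≤ n / p := (Nat.one_le_div_iff (by omega)).2 hpleN
          have hdne : n / p ≠ 1 := by
            intro h
            apply hnP
            have : n = p * 1 := Nat.eq_mul_of_div_eq_right hpn h
            simpa [this] using hp
          have hd2 : 2 ≤ n / p := by omega
          have hdlt : n / p < n := Nat.div_lt_self (by omega) (by omega)
          have hrec : PAlg P (n / p) (cpxP P (n / p)) := palg_cpxP hprime (by omega)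
          have h1 : cpxP P n ≤ cpx p + cpxP P (n / p) :=
            cpxP_le (PAlg.div (by omega) hnP hp hpn hrec)
          have h1' : (cpxP P n : ℝ) ≤ (cpx p : ℝ) + (cpxP P (n / p) : ℝ) := by exact_mod_cast h1
          have ihnp := ih (n / p) hdlt hd2
          have hsplit : Real.logb 3 p + Real.logb 3 ((n / p : ℕ) : ℝ) = Real.logb 3 n := by
            have hcast : (p : ℝ) * ((n / p : ℕ) : ℝ) = (n : ℝ) := by
              exact_mod_cast congrArg (Nat.cast (R := ℝ)) (Nat.mul_div_cancel' hpn)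
            rw [← hcast, Real.logb_mul (by positivity) (by positivity)]
          have lp : 0 < Real.logb 3 p := hln p hp2
          have h2 := hcpxp p hp
          nlinarith [mul_nonneg hB0 lp.le]
      · have hnP : n ∉ P := fun h => (not_exists.mp hdiv n) ⟨h, dvd_rfl⟩
        push_neg at hdiv
        by_cases hlt : n < q
        · have h1 : cpxP P n ≤ n := cpxP_le (palg_small P q hqmin n (by omega) hlt)
          have h1' : (cpxP P n : ℝ) ≤ (n : ℝ) := by exact_mod_cast h1
          have hkey : ((n:ℝ) - 1) * Real.log q ≤ ((q:ℝ) - 1) * Real.log n :=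
            key_ineq (by exact_mod_cast hn) (by exact_mod_cast (by omega : n + 1 ≤ q))
          have hlq' : 0 < Real.log q := Real.log_pos (by exact_mod_cast hq2)
          have h2 : (n : ℝ) - 1 ≤ B * Real.logb 3 n := by
            have hratio : B * Real.logb 3 n = ((q:ℝ) - 1) * Real.log n / Real.log q := by
              rw [hB, Real.logb, Real.logb]
              have h3 : Real.log 3 ≠ 0 := by
                have : (0:ℝ) < Real.log 3 := Real.log_pos (by norm_num)
                linarith
              field_simp
            rw [hratio, le_div_iff₀ hlq']
            exact hkey
          have h3 := hA1 n hn
          have : (cpxP P n : ℝ) ≤ A * Real.logb 3 n + B * Real.logb 3 n := by linarith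
          linarith [this, (by ring : A * Real.logb 3 n + B * Real.logb 3 n = (A + B) * Real.logb 3 n)]
        · -- n > q
          have hnq : q < n := by
            rcases eq_or_lt_of_le (not_lt.mp hlt) with h | h
            · exact absurd (h ▸ dvd_rfl : q ∣ n) (hdiv q hq)
            · exact h
          have hr1 : 1 ≤ n % q := by
            rcases Nat.eq_zero_or_pos (n % q) with h | h
            · exact absurd (Nat.dvd_of_mod_eq_zero h) (hdiv q hq)
            · exact h
          have hrq : n % q < q := Nat.mod_lt _ (by omega)
          have hdm := Nat.div_add_mod n q
          have hnq1 : 1 ≤ n / q := (Nat.one_le_div_iff (by omega)).2 (by omega)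
          have hqmul : q ≤ q * (n / q) := Nat.le_mul_of_pos_right q hnq1
          have hex : ∃ t, 1 ≤ t ∧ ∃ p ∈ P, p ∣ (n - t) :=
            ⟨n % q, hr1, q, hq, ⟨n / q, by omega⟩⟩
          set t := Nat.find hex with htdef
          obtain ⟨ht1, p, hp, hpm⟩ := Nat.find_spec hex
          have htr : t ≤ n % q := Nat.find_min' hex ⟨hr1, q, hq, ⟨n / q, by omega⟩⟩
          have hp2 : 2 ≤ p := (hprime p hp).two_le
          have hm2 : q ≤ n - t := by omega
          have hchain : ∀ s, s < t → 1 < n - s ∧ ∀ p' ∈ P, ¬ p' ∣ (n - s) := by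
            intro s hst
            constructor
            · omega
            · rcases Nat.eq_zero_or_pos s with h0 | h0
              · intro p' hp' hd
                rw [h0, Nat.sub_zero] at hd
                exact hdiv p' hp' hd
              · intro p' hp' hd
                exact Nat.find_min hex hst ⟨h0, p', hp', hd⟩
          set m := n - t with hmdef
          have hmn : m < n := by omega
          have hmlog : Real.logb 3 m ≤ Real.logb 3 n := by
            apply logb_mono _ _ (by exact_mod_cast (by omega : 0 < m)) (by exact_mod_cast hmn.le)
          have htq : (t : ℝ) ≤ (q : ℝ) - 1 := by
            have : t + 1 ≤ q := by omega
            have := (Nat.cast_le (α := ℝ)).2 this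
            push_cast at this
            linarith
          have hBlogn : (q : ℝ) - 1 ≤ B * Real.logb 3 n := by
            have : Real.logb 3 q ≤ Real.logb 3 n := by
              apply logb_mono _ _ (by exact_mod_cast (by omega : 0 < q)) (by exact_mod_cast hnq.le)
            nlinarith [hB0]
          by_cases hmP : m ∈ P
          · have hpalg : PAlg P n (cpx m + t) :=
              palg_chain P t n (cpx m) hchain (PAlg.base hmP)
            have h1 : (cpxP P n : ℝ) ≤ (cpx m : ℝ) + t := by exact_mod_cast cpxP_le hpalg
            have h2 : (cpx m : ℝ) ≤ A * Real.logb 3 m := hcpxp m hmP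
            have h3 : A * Real.logb 3 m ≤ A * Real.logb 3 n :=
              mul_le_mul_of_nonneg_left hmlog hA0
            nlinarith
          · have hplem : p ≤ m := Nat.le_of_dvd (by omega) hpm
            have hd1 : 1 ≤ m / p := (Nat.one_le_div_iff (by omega)).2 hplem
            have hdne : m / p ≠ 1 := by
              intro h
              apply hmP
              have : m = p * 1 := Nat.eq_mul_of_div_eq_right hpm h
              simpa [this] using hp
            have hd2 : 2 ≤ m / p := by omega
            have hdlt : m / p < n := lt_of_le_of_lt (Nat.div_le_self _ _) hmn
            have hrec : PAlg P (m / p) (cpxP P (m / p)) := palg_cpxP hprime (by omega)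
            have hpalg : PAlg P n (cpx p + cpxP P (m / p) + t) :=
              palg_chain P t n _ hchain (PAlg.div (by omega) hmP hp hpm hrec)
            have h1 : (cpxP P n : ℝ) ≤ (cpx p : ℝ) + (cpxP P (m / p) : ℝ) + t := by
              exact_mod_cast cpxP_le hpalg
            have ihm := ih (m / p) hdlt hd2
            have hsplit : Real.logb 3 p + Real.logb 3 ((m / p : ℕ) : ℝ) = Real.logb 3 m := by
              have hcast : (p : ℝ) * ((m / p : ℕ) : ℝ) = (m : ℝ) := by
                exact_mod_cast congrArg (Nat.cast (R := ℝ)) (Nat.mul_div_cancel' hpm)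
              rw [← hcast, Real.logb_mul (by positivity) (by positivity)]
            have h2 := hcpxp p hp
            have hqlep : (q : ℝ) - 1 ≤ B * Real.logb 3 p := by
              have : Real.logb 3 q ≤ Real.logb 3 p := by
                apply logb_mono _ _ (by exact_mod_cast (by omega : 0 < q))
                exact_mod_cast hqmin p hp
              nlinarith [hB0]
            have hABmul : (A + B) * Real.logb 3 ((m / p : ℕ) : ℝ) ≤
                (A + B) * (Real.logb 3 n - Real.logb 3 p) := by
              apply mul_le_mul_of_nonneg_left _ (by linarith)
              linarith
            nlinarith
  intro n hn
  have h := main n hn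
  rw [div_le_iff₀ (hln n hn)]
  calc (cpxP P n : ℝ) ≤ (A + B) * Real.logb 3 n := h
    _ = (A + B) * Real.logb 3 n := rfl
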